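/- Let G be a strongly regular graph with parameters (n, k, 0, μ), where n ≥ 5 is odd and μ ≥ 1. Then q(G) = 3: every matrix M ∈ S(G) has at least 3 distinct eigenvalues, and there exists a matrix in S(G) (for instance the adjacency matrix of G) with exactly 3 distinct eigenvalues. -/

import Mathlib

/-- `S(G)`: real symmetric matrices whose off-diagonal zero/nonzero pattern
matches the adjacency of `G`; the diagonal is unconstrained. -/
def Sset {V : Type*} [Fintype V] [DecidableEq V] (G : SimpleGraph V) : Set (Matrix V V ℝ) :=
  {M | M.IsSymm ∧ ∀ u v : V, u ≠ v → (M u v ≠ 0 ↔ G.Adj u v)}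

/-- `q(G)`: the minimum number of distinct eigenvalues over matrices in `S(G)`. -/
noncomputable def minQ {V : Type*} [Fintype V] [DecidableEq V] (G : SimpleGraph V) : ℕ :=
  sInf {k : ℕ | ∃ M ∈ Sset G, (spectrum ℝ M).ncard = k}

open Matrix


open Matrix in
lemma herm_of_symm {V : Type*} [Fintype V] {M : Matrix V V ℝ} (h : M.IsSymm) : M.IsHermitian := by
  rwa [Matrix.IsHermitian, Matrix.conjTranspose_eq_transpose_of_trivial]

open Matrix in
lemma sub_smul_conj {V : Type*} [Fintype V] [DecidableEq V] {M : Matrix V V ℝ}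
    (hM : M.IsHermitian) (a : ℝ) :
    M - a • 1 = (hM.eigenvectorUnitary : Matrix V V ℝ) *
      (Matrix.diagonal (fun i => hM.eigenvalues i - a)) *
      star (hM.eigenvectorUnitary : Matrix V V ℝ) := by
  have hU : (hM.eigenvectorUnitary : Matrix V V ℝ) * star (hM.eigenvectorUnitary : Matrix V V ℝ) = 1 :=
    Matrix.mem_unitaryGroup_iff.mp hM.eigenvectorUnitary.2
  have hdiag : Matrix.diagonal (fun i => hM.eigenvalues i - a)
      = Matrix.diagonal (RCLike.ofReal ∘ hM.eigenvalues) - a • (1 : Matrix V V ℝ) := by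
    rw [Matrix.smul_one_eq_diagonal, ← Matrix.diagonal_sub]
    simp [RCLike.ofReal_real_eq_id]
  rw [hdiag, Matrix.mul_sub, Matrix.sub_mul]
  rw [← Unitary.conjStarAlgAut_apply (S := ℝ), ← hM.spectral_theorem]
  congr 1
  rw [Matrix.mul_smul, Matrix.mul_one, Matrix.smul_mul, hU]

open Matrix in
lemma prod_eq_zero_of_two {V : Type*} [Fintype V] [DecidableEq V] {M : Matrix V V ℝ}
    (hM : M.IsHermitian) (a b : ℝ) (h : ∀ i, hM.eigenvalues i = a ∨ hM.eigenvalues i = b) :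
    (M - a • 1) * (M - b • 1) = 0 := by
  have hU' : star (hM.eigenvectorUnitary : Matrix V V ℝ) * (hM.eigenvectorUnitary : Matrix V V ℝ) = 1 :=
    Matrix.mem_unitaryGroup_iff'.mp hM.eigenvectorUnitary.2
  rw [sub_smul_conj hM a, sub_smul_conj hM b]
  calc ((hM.eigenvectorUnitary : Matrix V V ℝ) * Matrix.diagonal (fun i => hM.eigenvalues i - a) *
        star (hM.eigenvectorUnitary : Matrix V V ℝ)) *
      ((hM.eigenvectorUnitary : Matrix V V ℝ) * Matrix.diagonal (fun i => hM.eigenvalues i - b) *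
        star (hM.eigenvectorUnitary : Matrix V V ℝ))
      = (hM.eigenvectorUnitary : Matrix V V ℝ) * (Matrix.diagonal (fun i => hM.eigenvalues i - a) *
          Matrix.diagonal (fun i => hM.eigenvalues i - b)) *
        star (hM.eigenvectorUnitary : Matrix V V ℝ) := by
        rw [Matrix.mul_assoc, Matrix.mul_assoc, Matrix.mul_assoc, ← Matrix.mul_assoc (star _), hU']
        rw [Matrix.one_mul]
        simp only [Matrix.mul_assoc]
    _ = 0 := by
        rw [Matrix.diagonal_mul_diagonal]
        have : (fun i => (hM.eigenvalues i - a) * (hM.eigenvalues i - b)) = fun _ => (0:ℝ) := by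
          funext i; rcases h i with h' | h' <;> rw [h'] <;> ring
        rw [this]
        simp

open Matrix in
lemma trace_eq_sum_eig {V : Type*} [Fintype V] [DecidableEq V] {M : Matrix V V ℝ}
    (hM : M.IsHermitian) : M.trace = ∑ i, hM.eigenvalues i := by
  have hU' : star (hM.eigenvectorUnitary : Matrix V V ℝ) * (hM.eigenvectorUnitary : Matrix V V ℝ) = 1 :=
    Matrix.mem_unitaryGroup_iff'.mp hM.eigenvectorUnitary.2
  conv_lhs => rw [hM.spectral_theorem]
  rw [Unitary.conjStarAlgAut_apply, Matrix.trace_mul_cycle, hU', Matrix.one_mul, Matrix.trace_diagonal]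
  simp [RCLike.ofReal_real_eq_id]


lemma srg_facts {V : Type*} [Fintype V] [DecidableEq V] (G : SimpleGraph V)
    [DecidableRel G.Adj] {n k μ : ℕ} (hsrg : G.IsSRGWith n k 0 μ)
    (hn : 5 ≤ n) (hμ : 1 ≤ μ) :
    (∃ u v : V, u ≠ v ∧ ¬ G.Adj u v) ∧ (∃ u v : V, G.Adj u v) ∧ 1 ≤ k ∧ μ ≤ k := by
  have hcard : Fintype.card V = n := hsrg.card
  have hc5 : 5 ≤ Fintype.card V := hcard ▸ hn
  have hnonadj : ∃ u v : V, u ≠ v ∧ ¬ G.Adj u v := by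
    by_contra hall
    push_neg at hall
    obtain ⟨u, v, huv⟩ := Fintype.exists_pair_of_one_lt_card (α := V) (by omega)
    have hadj : G.Adj u v := hall u v huv
    have h0 : Fintype.card (G.commonNeighbors u v) = 0 := hsrg.of_adj u v hadj
    have hlt : ({u, v} : Finset V).card < Fintype.card V := by
      calc ({u, v} : Finset V).card ≤ 2 := Finset.card_le_two
        _ < Fintype.card V := by omega
    obtain ⟨w, -, hw⟩ := Finset.exists_of_ssubset
      (Finset.ssubset_univ_iff.mpr (Finset.card_lt_iff_ne_univ _ |>.mp hlt))
    rw [Finset.mem_insert, Finset.mem_singleton] at hw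
    push_neg at hw
    have hwmem : w ∈ G.commonNeighbors u v :=
      (SimpleGraph.mem_commonNeighbors G).mpr ⟨(hall u w (Ne.symm hw.1)), (hall v w (Ne.symm hw.2))⟩
    exact (Fintype.card_eq_zero_iff.mp h0).false ⟨w, hwmem⟩
  obtain ⟨u, v, huv, hnadj⟩ := hnonadj
  have hμcard : Fintype.card (G.commonNeighbors u v) = μ := hsrg.of_not_adj huv hnadj
  have hpos : 0 < Fintype.card (G.commonNeighbors u v) := by omega
  obtain ⟨⟨w, hw⟩⟩ := Fintype.card_pos_iff.mp hpos
  have hadj : G.Adj u w := ((SimpleGraph.mem_commonNeighbors G).mp hw).1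
  refine ⟨⟨u, v, huv, hnadj⟩, ⟨u, w, hadj⟩, ?_, ?_⟩
  · have := hsrg.regular u
    have h1 : 0 < G.degree u := G.degree_pos_iff_exists_adj u |>.mpr ⟨w, hadj⟩
    omega
  · have := G.card_commonNeighbors_le_degree_left u v
    have := hsrg.regular u
    omega

lemma lower_bound {V : Type*} [Fintype V] [DecidableEq V] (G : SimpleGraph V)
    [DecidableRel G.Adj] {n k μ : ℕ} (hsrg : G.IsSRGWith n k 0 μ)
    (hn : 5 ≤ n) (hodd : Odd n) (hμ : 1 ≤ μ) :
    ∀ M ∈ Sset G, 3 ≤ (spectrum ℝ M).ncard := by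
  obtain ⟨hnonadj, ⟨u0, v0, he0⟩, hk1, hμk⟩ := srg_facts G hsrg hn hμ
  have hcard : Fintype.card V = n := hsrg.card
  have hV : Nonempty V := Fintype.card_pos_iff.mp (by omega)
  intro M hM
  obtain ⟨hsymm, hpat⟩ := hM
  have hherm : M.IsHermitian := herm_of_symm hsymm
  by_contra hlt
  push_neg at hlt
  -- the eigenvalue image
  set T : Finset ℝ := Finset.image hherm.eigenvalues Finset.univ with hT
  have hTcoe : (T : Set ℝ) = spectrum ℝ M := by
    rw [hherm.spectrum_real_eq_range_eigenvalues, hT, Finset.coe_image, Finset.coe_univ, Set.image_univ]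
  have hTcard : T.card < 3 := by
    rw [← Set.ncard_coe_finset, hTcoe]; exact hlt
  obtain ⟨a, haT⟩ : T.Nonempty :=
    ⟨_, Finset.mem_image_of_mem _ (Finset.mem_univ (Classical.arbitrary V))⟩
  -- find a, b covering T
  obtain ⟨b, hab⟩ : ∃ b : ℝ, ∀ c ∈ T, c = a ∨ c = b := by
    by_cases h : ∃ b ∈ T, b ≠ a
    · obtain ⟨b, hbT, hba⟩ := h
      refine ⟨b, fun c hcT => ?_⟩
      by_contra hc
      push_neg at hc
      have hsub : ({a, b, c} : Finset ℝ) ⊆ T := by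
        intro x hx
        simp only [Finset.mem_insert, Finset.mem_singleton] at hx
        rcases hx with rfl | rfl | rfl <;> assumption
      have h3 : ({a, b, c} : Finset ℝ).card = 3 := by
        rw [Finset.card_insert_of_notMem (by simp [hba.symm, Ne.symm hc.1]),
          Finset.card_insert_of_notMem (by simp [Ne.symm hc.2])]
        simp
      have := Finset.card_le_card hsub
      omega
    · push_neg at h
      exact ⟨a, fun c hcT => Or.inl (h c hcT)⟩
  have key : ∀ i, hherm.eigenvalues i = a ∨ hherm.eigenvalues i = b :=
    fun i => hab _ (Finset.mem_image_of_mem _ (Finset.mem_univ i))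
  have hprod : (M - a • 1) * (M - b • 1) = 0 := prod_eq_zero_of_two hherm a b key
  -- the edge relation
  have hedge : ∀ u v : V, G.Adj u v → M u u + M v v = a + b := by
    intro u v huv
    have hne : u ≠ v := huv.ne
    have hMuv : M u v ≠ 0 := (hpat u v hne).mpr huv
    have h0 : ((M - a • 1) * (M - b • 1)) u v = 0 := by rw [hprod]; rfl
    rw [Matrix.mul_apply] at h0
    have hzero : ∀ w ∈ Finset.univ, w ∉ ({u, v} : Finset V) →
        (M - a • 1) u w * (M - b • 1) w v = 0 := by
      intro w _ hw
      rw [Finset.mem_insert, Finset.mem_singleton] at hw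
      push_neg at hw
      by_cases h1 : M u w = 0
      · have : (M - a • 1) u w = 0 := by
          simp [Matrix.sub_apply, Matrix.smul_apply, Matrix.one_apply, (Ne.symm hw.1 : ¬ u = w), h1]
        rw [this, zero_mul]
      · by_cases h2 : M w v = 0
        · have : (M - b • 1) w v = 0 := by
            simp [Matrix.sub_apply, Matrix.smul_apply, Matrix.one_apply, hw.2, h2]
          rw [this, mul_zero]
        · exfalso
          have hadj1 : G.Adj u w := (hpat u w (Ne.symm hw.1)).mp h1
          have hadj2 : G.Adj w v := (hpat w v hw.2).mp h2
          have hmem : w ∈ G.commonNeighbors u v :=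
            (SimpleGraph.mem_commonNeighbors G).mpr ⟨hadj1, hadj2.symm⟩
          have h00 : Fintype.card (G.commonNeighbors u v) = 0 := hsrg.of_adj u v huv
          exact (Fintype.card_eq_zero_iff.mp h00).false ⟨w, hmem⟩
    rw [← Finset.sum_subset (Finset.subset_univ ({u, v} : Finset V)) hzero,
      Finset.sum_pair hne] at h0
    have h0' : (M u u - a) * M u v + M u v * (M v v - b) = 0 := by
      have e1 : (M - a • 1) u u = M u u - a := by
        simp [Matrix.sub_apply, Matrix.smul_apply, Matrix.one_apply]
      have e2 : (M - b • 1) u v = M u v := by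
        simp [Matrix.sub_apply, Matrix.smul_apply, Matrix.one_apply, hne]
      have e3 : (M - a • 1) u v = M u v := by
        simp [Matrix.sub_apply, Matrix.smul_apply, Matrix.one_apply, hne]
      have e4 : (M - b • 1) v v = M v v - b := by
        simp [Matrix.sub_apply, Matrix.smul_apply, Matrix.one_apply]
      rw [e1, e2, e3, e4] at h0
      exact h0
    have hfac : (M u u + M v v - (a + b)) * M u v = 0 := by
      have : (M u u + M v v - (a + b)) * M u v
          = (M u u - a) * M u v + M u v * (M v v - b) := by ring
      rw [this, h0']
    rcases mul_eq_zero.mp hfac with h | h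
    · linarith
    · exact absurd h hMuv
  -- trace computed two ways
  have hsym' : ∀ i j : V, M j i = M i j := fun i j => hsymm.apply i j
  have hS1 : ∑ u : V, ∑ v ∈ G.neighborFinset u, (M u u + M v v)
      = (n : ℝ) * ((k : ℝ) * (a + b)) := by
    have hinner : ∀ u : V, ∑ v ∈ G.neighborFinset u, (M u u + M v v) = (k : ℝ) * (a + b) := by
      intro u
      have h1 : ∀ v ∈ G.neighborFinset u, M u u + M v v = a + b := fun v hv =>
        hedge u v ((SimpleGraph.mem_neighborFinset G u v).mp hv)
      rw [Finset.sum_congr rfl h1, Finset.sum_const, G.card_neighborFinset_eq_degree,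
        hsrg.regular u, nsmul_eq_mul]
    rw [Finset.sum_congr rfl (fun u _ => hinner u), Finset.sum_const, Finset.card_univ, hcard,
      nsmul_eq_mul]
  have hS2 : ∑ u : V, ∑ v ∈ G.neighborFinset u, (M u u + M v v)
      = 2 * ((k : ℝ) * ∑ u : V, M u u) := by
    have hsplit : ∀ u : V, ∑ v ∈ G.neighborFinset u, (M u u + M v v)
        = (∑ v ∈ G.neighborFinset u, M u u) + ∑ v ∈ G.neighborFinset u, M v v :=
      fun u => Finset.sum_add_distrib
    rw [Finset.sum_congr rfl (fun u _ => hsplit u), Finset.sum_add_distrib]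
    have hA : ∑ u : V, ∑ _v ∈ G.neighborFinset u, M u u = (k : ℝ) * ∑ u : V, M u u := by
      rw [Finset.mul_sum]
      refine Finset.sum_congr rfl fun u _ => ?_
      rw [Finset.sum_const, G.card_neighborFinset_eq_degree, hsrg.regular u, nsmul_eq_mul]
    have hB : ∑ u : V, ∑ v ∈ G.neighborFinset u, M v v = (k : ℝ) * ∑ u : V, M u u := by
      calc ∑ u : V, ∑ v ∈ G.neighborFinset u, M v v
          = ∑ u : V, ∑ v : V, if G.Adj u v then M v v else 0 := by
            refine Finset.sum_congr rfl fun u _ => ?_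
            rw [SimpleGraph.neighborFinset_eq_filter, Finset.sum_filter]
        _ = ∑ v : V, ∑ u : V, if G.Adj u v then M v v else 0 := Finset.sum_comm
        _ = ∑ v : V, ∑ u : V, if G.Adj v u then M v v else 0 := by
            exact Finset.sum_congr rfl fun v _ => Finset.sum_congr rfl fun u _ =>
              if_congr (G.adj_comm u v) rfl rfl
        _ = ∑ v : V, ∑ u ∈ G.neighborFinset v, M v v := by
            refine Finset.sum_congr rfl fun v _ => ?_
            rw [SimpleGraph.neighborFinset_eq_filter, Finset.sum_filter]
        _ = (k : ℝ) * ∑ v : V, M v v := by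
            rw [Finset.mul_sum]
            refine Finset.sum_congr rfl fun v _ => ?_
            rw [Finset.sum_const, G.card_neighborFinset_eq_degree, hsrg.regular v, nsmul_eq_mul]
    rw [hA, hB]
    ring
  have hk0 : (k : ℝ) ≠ 0 := Nat.cast_ne_zero.mpr (by omega)
  have htr2 : 2 * (∑ u : V, M u u) = (n : ℝ) * (a + b) := by
    have h' : (k : ℝ) * (2 * ∑ u : V, M u u) = (k : ℝ) * ((n : ℝ) * (a + b)) := by
      linear_combination (-1 : ℝ) * (hS1.symm.trans hS2)
    exact mul_left_cancel₀ hk0 h'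
  -- trace as sum of eigenvalues
  have htreig : ∑ u : V, M u u = ∑ i, hherm.eigenvalues i := by
    rw [← trace_eq_sum_eig hherm, Matrix.trace]
    rfl
  set P : Finset V := Finset.univ.filter (fun i => hherm.eigenvalues i = a) with hP
  set p : ℕ := P.card with hp
  set q : ℕ := (Finset.univ.filter (fun i => ¬ hherm.eigenvalues i = a)).card with hq
  have hpq : p + q = n := by
    rw [hp, hq, Finset.card_filter_add_card_filter_not, Finset.card_univ, hcard]
  have hsum : ∑ i, hherm.eigenvalues i = (p : ℝ) * a + (q : ℝ) * b := by
    rw [← Finset.sum_filter_add_sum_filter_not Finset.univ (fun i => hherm.eigenvalues i = a)]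
    congr 1
    · rw [Finset.sum_congr rfl (fun i hi => (Finset.mem_filter.mp hi).2), Finset.sum_const,
        nsmul_eq_mul]
    · have : ∀ i ∈ Finset.univ.filter (fun i => ¬ hherm.eigenvalues i = a),
          hherm.eigenvalues i = b := by
        intro i hi
        rcases key i with h | h
        · exact absurd h (Finset.mem_filter.mp hi).2
        · exact h
      rw [Finset.sum_congr rfl this, Finset.sum_const, nsmul_eq_mul]
  have hpqne : p ≠ q := by
    intro h
    obtain ⟨m, hm⟩ := hodd
    omega
  have haeqb : a = b := by
    have hcast : ((p : ℝ) + (q : ℝ)) = (n : ℝ) := by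
      rw [← hpq]; push_cast; ring
    have heq : ((p : ℝ) - (q : ℝ)) * (a - b)
        = 2 * ((p : ℝ) * a + (q : ℝ) * b) - ((p : ℝ) + (q : ℝ)) * (a + b) := by ring
    have hz : ((p : ℝ) - (q : ℝ)) * (a - b) = 0 := by
      rw [heq, hcast, ← hsum, ← htreig, htr2]
      ring
    rcases mul_eq_zero.mp hz with h | h
    · exfalso
      apply hpqne
      have : (p : ℝ) = (q : ℝ) := by linarith
      exact_mod_cast this
    · linarith
  -- now all eigenvalues equal a, derive contradiction with the edge u0 v0
  have hprod2 : (M - a • 1) * (M - a • 1) = 0 := by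
    rw [haeqb] at hprod ⊢
    exact hprod
  have h0 : ∑ w : V, (M - a • 1) u0 w * (M - a • 1) w u0 = 0 := by
    have := congrFun (congrFun hprod2 u0) u0
    rw [Matrix.mul_apply] at this
    exact this
  have hsq : ∑ w : V, ((M - a • 1) u0 w) ^ 2 = 0 := by
    rw [← h0]
    refine Finset.sum_congr rfl fun w _ => ?_
    have : (M - a • 1) w u0 = (M - a • 1) u0 w := by
      simp only [Matrix.sub_apply, Matrix.smul_apply, Matrix.one_apply]
      rw [hsym' u0 w]
      by_cases h : u0 = w
      · subst h; simp
      · simp [h, Ne.symm h]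
    rw [this]
    ring
  have hterm : ((M - a • 1) u0 v0) ^ 2 = 0 := by
    have := (Finset.sum_eq_zero_iff_of_nonneg (fun w _ => sq_nonneg _)).mp hsq v0
      (Finset.mem_univ v0)
    exact this
  have hne0 : u0 ≠ v0 := he0.ne
  have : (M - a • 1) u0 v0 = M u0 v0 := by
    simp [Matrix.sub_apply, Matrix.smul_apply, Matrix.one_apply, hne0]
  rw [this] at hterm
  exact (hpat u0 v0 hne0).mpr he0 (pow_eq_zero_iff (by norm_num) |>.mp hterm)


lemma adj_in_Sset {V : Type*} [Fintype V] [DecidableEq V] (G : SimpleGraph V)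
    [DecidableRel G.Adj] :
    (G.adjMatrix ℝ).IsSymm ∧ ∀ u v : V, u ≠ v → ((G.adjMatrix ℝ) u v ≠ 0 ↔ G.Adj u v) := by
  refine ⟨G.isSymm_adjMatrix, fun u v _ => ?_⟩
  simp only [SimpleGraph.adjMatrix_apply]
  by_cases h : G.Adj u v <;> simp [h]

lemma adj_spectrum_sub {V : Type*} [Fintype V] [DecidableEq V] (G : SimpleGraph V)
    [DecidableRel G.Adj] {n k μ : ℕ} (hsrg : G.IsSRGWith n k 0 μ)
    (hk1 : 1 ≤ k) (hμ : 1 ≤ μ) (hμk : μ ≤ k) :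
    ∃ r s : ℝ, spectrum ℝ (G.adjMatrix ℝ) ⊆ {(k : ℝ), r, s} := by
  set D : ℝ := (μ : ℝ)^2 + 4 * k - 4 * μ with hD
  have hD0 : 0 ≤ D := by
    have h1 : (1 : ℝ) ≤ (μ : ℝ) := by exact_mod_cast hμ
    have h2 : (μ : ℝ) ≤ (k : ℝ) := by exact_mod_cast hμk
    nlinarith
  set t : ℝ := Real.sqrt D with ht
  have ht2 : t ^ 2 = D := Real.sq_sqrt hD0
  refine ⟨(-(μ : ℝ) + t) / 2, (-(μ : ℝ) - t) / 2, ?_⟩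
  intro x hx
  rw [spectrum.mem_iff, Matrix.isUnit_iff_isUnit_det, isUnit_iff_ne_zero, not_not] at hx
  obtain ⟨v, hv0, hv⟩ := (Matrix.exists_mulVec_eq_zero_iff).mpr hx
  have hAv : G.adjMatrix ℝ *ᵥ v = x • v := by
    have h1 : (x • (1 : Matrix V V ℝ) - G.adjMatrix ℝ) *ᵥ v = 0 := by
      rwa [← Algebra.algebraMap_eq_smul_one]
    rw [Matrix.sub_mulVec, Matrix.smul_mulVec, Matrix.one_mulVec, sub_eq_zero] at h1
    exact h1.symm
  set S : ℝ := ∑ w, v w with hS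
  -- the complement adjacency action
  have hC : ∀ u : V, (Gᶜ.adjMatrix ℝ *ᵥ v) u = S - v u - x * v u := by
    intro u
    have hdecomp : ∀ w : V, v w = (1 : Matrix V V ℝ) u w * v w
        + G.adjMatrix ℝ u w * v w + Gᶜ.adjMatrix ℝ u w * v w := by
      intro w
      by_cases huw : u = w
      · subst huw
        simp [Matrix.one_apply]
      · by_cases hadj : G.Adj u w
        · simp [Matrix.one_apply, huw, hadj, SimpleGraph.compl_adj]
        · simp [Matrix.one_apply, huw, hadj, SimpleGraph.compl_adj]
    have hsum : S = v u + x * v u + (Gᶜ.adjMatrix ℝ *ᵥ v) u := by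
      calc S = ∑ w, ((1 : Matrix V V ℝ) u w * v w
            + G.adjMatrix ℝ u w * v w + Gᶜ.adjMatrix ℝ u w * v w) :=
          Finset.sum_congr rfl fun w _ => hdecomp w
        _ = (∑ w, (1 : Matrix V V ℝ) u w * v w) + (∑ w, G.adjMatrix ℝ u w * v w)
            + ∑ w, Gᶜ.adjMatrix ℝ u w * v w := by
          rw [Finset.sum_add_distrib, Finset.sum_add_distrib]
        _ = v u + x * v u + (Gᶜ.adjMatrix ℝ *ᵥ v) u := by
          have e1 : ∑ w, (1 : Matrix V V ℝ) u w * v w = v u := by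
            have h := congrFun (Matrix.one_mulVec v) u
            simpa [Matrix.mulVec, dotProduct] using h
          have e2 : ∑ w, G.adjMatrix ℝ u w * v w = x * v u := by
            have h := congrFun hAv u
            simpa [Matrix.mulVec, dotProduct] using h
          have e3 : ∑ w, Gᶜ.adjMatrix ℝ u w * v w = (Gᶜ.adjMatrix ℝ *ᵥ v) u := rfl
          rw [e1, e2, e3]
    linarith [hsum]
  -- the quadratic relation
  have hmain : ∀ u : V, (x ^ 2 + (μ : ℝ) * x + ((μ : ℝ) - (k : ℝ))) * v u = (μ : ℝ) * S := by
    intro u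
    have hsq := hsrg.matrix_eq (α := ℝ)
    have h1 : (G.adjMatrix ℝ ^ 2) *ᵥ v = (x ^ 2) • v := by
      rw [pow_two, ← Matrix.mulVec_mulVec, hAv, Matrix.mulVec_smul, hAv, smul_smul, ← pow_two]
    have h2 : (G.adjMatrix ℝ ^ 2) *ᵥ v
        = ((k : ℕ) • (1 : Matrix V V ℝ) + (0 : ℕ) • G.adjMatrix ℝ + (μ : ℕ) • Gᶜ.adjMatrix ℝ) *ᵥ v := by
      rw [hsq]
    rw [h1] at h2
    simp only [← Nat.cast_smul_eq_nsmul (R := ℝ)] at h2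
    have h3 := congrFun h2 u
    simp only [Matrix.add_mulVec, Matrix.smul_mulVec, Matrix.one_mulVec,
      Nat.cast_zero, zero_smul, Matrix.zero_mulVec, add_zero, zero_add,
      Pi.add_apply, Pi.smul_apply, smul_eq_mul] at h3
    rw [hC u] at h3
    linear_combination h3
  simp only [Set.mem_insert_iff, Set.mem_singleton_iff]
  by_cases hq : x ^ 2 + (μ : ℝ) * x + ((μ : ℝ) - (k : ℝ)) = 0
  · have hfact : (x - (-(μ : ℝ) + t) / 2) * (x - (-(μ : ℝ) - t) / 2) = 0 := by
      have hexp : (x - (-(μ : ℝ) + t) / 2) * (x - (-(μ : ℝ) - t) / 2)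
          = x ^ 2 + (μ : ℝ) * x + ((μ : ℝ) ^ 2 - t ^ 2) / 4 := by ring
      rw [hexp, ht2, hD]
      linear_combination hq
    rcases mul_eq_zero.mp hfact with h | h
    · exact Or.inr (Or.inl (sub_eq_zero.mp h))
    · exact Or.inr (Or.inr (sub_eq_zero.mp h))
  · left
    obtain ⟨u1, hu1⟩ : ∃ u, v u ≠ 0 := Function.ne_iff.mp hv0
    have hconst : ∀ u : V, v u = v u1 := by
      intro u
      exact mul_left_cancel₀ hq ((hmain u).trans (hmain u1).symm)
    have hAu := congrFun hAv u1
    rw [SimpleGraph.adjMatrix_mulVec_apply] at hAu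
    have hsum : ∑ u ∈ G.neighborFinset u1, v u = (k : ℝ) * v u1 := by
      rw [Finset.sum_congr rfl (fun w _ => hconst w), Finset.sum_const,
        G.card_neighborFinset_eq_degree, hsrg.regular u1, nsmul_eq_mul]
    rw [hsum] at hAu
    have hxk : (k : ℝ) * v u1 = x * v u1 := by
      rw [hAu]; simp
    exact (mul_right_cancel₀ hu1 hxk).symm


/-- If `G` is a strongly regular graph with parameters `(n, k, 0, μ)`
where `n ≥ 5` is odd and `μ ≥ 1`, then `q(G) = 3`: every `M ∈ S(G)` has at least `3`
distinct eigenvalues, and the adjacency matrix of `G` lies in `S(G)` and has exactly `3`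
distinct eigenvalues. -/
theorem stmt_4 {V : Type*} [Fintype V] [DecidableEq V] (G : SimpleGraph V)
    [DecidableRel G.Adj] (n k μ : ℕ) (hsrg : G.IsSRGWith n k 0 μ)
    (hn : 5 ≤ n) (hodd : Odd n) (hμ : 1 ≤ μ) :
    (∀ M ∈ Sset G, 3 ≤ (spectrum ℝ M).ncard) ∧
    G.adjMatrix ℝ ∈ Sset G ∧ (spectrum ℝ (G.adjMatrix ℝ)).ncard = 3 ∧
    minQ G = 3 := by
  obtain ⟨-, -, hk1, hμk⟩ := srg_facts G hsrg hn hμ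
  have hlow := lower_bound G hsrg hn hodd hμ
  have hmem : G.adjMatrix ℝ ∈ Sset G := adj_in_Sset G
  have hcard3 : (spectrum ℝ (G.adjMatrix ℝ)).ncard = 3 := by
    obtain ⟨r, s, hsub⟩ := adj_spectrum_sub G hsrg hk1 hμ hμk
    have hle : (spectrum ℝ (G.adjMatrix ℝ)).ncard ≤ 3 := by
      have h1 := Set.ncard_le_ncard hsub (Set.toFinite _)
      have h2 : ({(k : ℝ), r, s} : Set ℝ).ncard ≤ 3 := by
        calc ({(k : ℝ), r, s} : Set ℝ).ncard ≤ ({r, s} : Set ℝ).ncard + 1 :=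
            Set.ncard_insert_le _ _
          _ ≤ (({s} : Set ℝ).ncard + 1) + 1 := by
            have := Set.ncard_insert_le r ({s} : Set ℝ)
            omega
          _ ≤ 3 := by rw [Set.ncard_singleton]
      omega
    have hge := hlow _ hmem
    omega
  refine ⟨hlow, hmem, hcard3, ?_⟩
  have h3mem : 3 ∈ {m : ℕ | ∃ M ∈ Sset G, (spectrum ℝ M).ncard = m} :=
    ⟨G.adjMatrix ℝ, hmem, hcard3⟩
  refine le_antisymm (Nat.sInf_le h3mem) ?_
  apply le_csInf ⟨3, h3mem⟩
  rintro m ⟨M, hMs, rfl⟩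
  exact hlow M hMs
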